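/- There exist a 2-weighted reachability game G, a vertex v₀ of G and a cost profile x ∈ ℕ² such that some strategy of Player 1 from v₀ ensures x with respect to the componentwise order ≤_C (i.e., Cost(Out(σ₁,σ₂,v₀)) ≤_C x for every strategy σ₂ of Player 2), but no positional strategy of Player 1 from v₀ ensures x, where a strategy σ₁ is positional if σ₁(hv) = σ₁(h'v) whenever the histories hv and h'v end in the same vertex v. Hence memory may be required for Pareto-optimal strategies under the componentwise order. -/

import Mathlib

open Classical

/-- Cost profiles: `d`-tuples over `ℕ ∪ {∞}`. -/
abbrev CostP (d : ℕ) := Fin d → ℕ∞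

/-- The componentwise order `≤_C` on `(ℕ ∪ {∞})^d`. -/
def leC {d : ℕ} (x y : CostP d) : Prop := x ≤ y

/-- The strict lexicographic order `<_L` on `(ℕ ∪ {∞})^d`. -/
def ltL {d : ℕ} (x y : CostP d) : Prop :=
  ∃ i, (∀ j, j < i → x j = y j) ∧ x i < y i

/-- The lexicographic order `≤_L` on `(ℕ ∪ {∞})^d`. -/
def leL {d : ℕ} (x y : CostP d) : Prop := x = y ∨ ltL x y

/-- Minimal elements of `X` with respect to an order `le`. -/
def minimalSet {α : Type*} (le : α → α → Prop) (X : Set α) : Set α :=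
  { x | x ∈ X ∧ ∀ y ∈ X, le y x → y = x }

/-- Upward closure of `X` with respect to an order `le`. -/
def upSet {α : Type*} (le : α → α → Prop) (X : Set α) : Set α :=
  { z | ∃ x ∈ X, le x z }

/-- Translation of a set of cost profiles by (the cast of) a tuple `c ∈ ℕ^d`. -/
def addW {d : ℕ} (X : Set (CostP d)) (c : Fin d → ℕ) : Set (CostP d) :=
  { z | ∃ x ∈ X, z = x + fun i => (c i : ℕ∞) }

/-- A `d`-weighted reachability game: a finite directed graph whose vertices are
partitioned into Player 1's vertices `V1` and Player 2's vertices (the complement),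
an edge relation `E` such that every vertex has a successor, a `d`-dimensional
weight function `w` on edges, and a target set `F`. -/
structure MWGame (V : Type*) (d : ℕ) where
  V1 : Set V
  E : V → V → Prop
  succ_nonempty : ∀ v, ∃ v', E v v'
  w : V → V → Fin d → ℕ
  F : Set V

namespace MWGame

variable {V : Type*} {d : ℕ}

/-- Strategies of Player 1: a choice of successor for every history
(represented as the pair (strict past, current vertex)), valid at Player 1's vertices. -/
def Strat1 (G : MWGame V d) :=
  { σ : List V → V → V // ∀ h u, u ∈ G.V1 → G.E u (σ h u) }

/-- Strategies of Player 2. -/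
def Strat2 (G : MWGame V d) :=
  { σ : List V → V → V // ∀ h u, u ∉ G.V1 → G.E u (σ h u) }

/-- The pair (strict past, current vertex) after `n` steps of the play consistent
with `σ₁` and `σ₂` from `v`. -/
noncomputable def outAux (G : MWGame V d) (σ₁ : G.Strat1) (σ₂ : G.Strat2) (v : V) :
    ℕ → List V × V
  | 0 => ([], v)
  | n + 1 =>
    let q := G.outAux σ₁ σ₂ v n
    (q.1 ++ [q.2], if q.2 ∈ G.V1 then σ₁.1 q.1 q.2 else σ₂.1 q.1 q.2)

/-- `Out(σ₁,σ₂,v)`: the unique play from `v` consistent with `σ₁` and `σ₂`. -/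
noncomputable def out (G : MWGame V d) (σ₁ : G.Strat1) (σ₂ : G.Strat2) (v : V) (n : ℕ) : V :=
  (G.outAux σ₁ σ₂ v n).2

/-- The cost profile of a play: the componentwise sum of weights up to the first
visit of the target set, and `(∞,…,∞)` if the target set is never visited. -/
noncomputable def cost (G : MWGame V d) (ρ : ℕ → V) : CostP d :=
  if h : ∃ ℓ, ρ ℓ ∈ G.F then
    fun i => ∑ n ∈ Finset.range (Nat.find h), (G.w (ρ n) (ρ (n + 1)) i : ℕ∞)
  else ⊤

/-- `Ensure^k(v)`: cost profiles that Player 1 can ensure from `v` within `k` steps. -/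
def EnsureK (G : MWGame V d) (le : CostP d → CostP d → Prop) (k : ℕ) (v : V) :
    Set (CostP d) :=
  { x | ∃ σ₁ : G.Strat1, ∀ σ₂ : G.Strat2,
      le (G.cost (G.out σ₁ σ₂ v)) x ∧
      ∀ h : (∃ ℓ, G.out σ₁ σ₂ v ℓ ∈ G.F), Nat.find h ≤ k }

/-- `Ensure(v)`: cost profiles that Player 1 can ensure from `v`. -/
def Ensure (G : MWGame V d) (le : CostP d → CostP d → Prop) (v : V) : Set (CostP d) :=
  { x | ∃ σ₁ : G.Strat1, ∀ σ₂ : G.Strat2, le (G.cost (G.out σ₁ σ₂ v)) x }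

/-- The sets `Iᵏ(v)` computed by the fixpoint algorithm, relative to the order `le`. -/
noncomputable def Iset (G : MWGame V d) (le : CostP d → CostP d → Prop) :
    ℕ → V → Set (CostP d)
  | 0, v => if v ∈ G.F then {0} else {⊤}
  | k + 1, v =>
    if v ∈ G.F then {0}
    else if v ∈ G.V1 then
      minimalSet le (⋃ v' ∈ { u | G.E v u }, addW (upSet le (G.Iset le k v')) (G.w v v'))
    else
      minimalSet le (⋂ v' ∈ { u | G.E v u }, addW (upSet le (G.Iset le k v')) (G.w v v'))

end MWGame

section Example16

inductive Vtx : Type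
  | v0 | va | vb | vc | vf | vg
deriving DecidableEq

instance : Fintype Vtx :=
  Fintype.ofList [.v0, .va, .vb, .vc, .vf, .vg] (by intro x; cases x <;> simp)

open Vtx

def edge : Vtx → Vtx → Bool
  | .v0, .va => true
  | .v0, .vb => true
  | .va, .vc => true
  | .vb, .vc => true
  | .vc, .vf => true
  | .vc, .vg => true
  | .vf, .vf => true
  | .vg, .vg => true
  | _, _ => false

def wt : Vtx → Vtx → Fin 2 → ℕ
  | .v0, .va => ![1, 0]
  | .v0, .vb => ![0, 1]
  | .vc, .vf => ![0, 1]
  | .vc, .vg => ![1, 0]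
  | _, _ => 0

def Gex : MWGame Vtx 2 where
  V1 := {v | v ≠ .v0}
  E u v := edge u v = true
  succ_nonempty v := by
    cases v
    · exact ⟨.va, rfl⟩
    · exact ⟨.vc, rfl⟩
    · exact ⟨.vc, rfl⟩
    · exact ⟨.vf, rfl⟩
    · exact ⟨.vf, rfl⟩
    · exact ⟨.vg, rfl⟩
  w := wt
  F := {v | v = .vf ∨ v = .vg}

lemma cost_eq (ρ : ℕ → Vtx) (h0 : ρ 0 ∉ Gex.F) (h1 : ρ 1 ∉ Gex.F) (h2 : ρ 2 ∉ Gex.F)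
    (h3 : ρ 3 ∈ Gex.F) :
    Gex.cost ρ = fun i =>
      ((wt (ρ 0) (ρ 1) i : ℕ∞) + (wt (ρ 1) (ρ 2) i : ℕ∞) + (wt (ρ 2) (ρ 3) i : ℕ∞)) := by
  have hex : ∃ ℓ, ρ ℓ ∈ Gex.F := ⟨3, h3⟩
  have hfind : Nat.find hex = 3 := by
    rw [Nat.find_eq_iff]
    refine ⟨h3, fun n hn => ?_⟩
    interval_cases n <;> assumption
  rw [MWGame.cost, dif_pos hex, hfind]
  funext i
  rw [Finset.sum_range_succ, Finset.sum_range_succ, Finset.sum_range_succ,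
    Finset.sum_range_zero, zero_add]
  rfl

lemma outAux_succ {V : Type} {d : ℕ} (G : MWGame V d) (σ₁ : G.Strat1) (σ₂ : G.Strat2)
    (v : V) (n : ℕ) :
    G.outAux σ₁ σ₂ v (n + 1) =
      ((G.outAux σ₁ σ₂ v n).1 ++ [(G.outAux σ₁ σ₂ v n).2],
        if (G.outAux σ₁ σ₂ v n).2 ∈ G.V1 then σ₁.1 (G.outAux σ₁ σ₂ v n).1 (G.outAux σ₁ σ₂ v n).2
        else σ₂.1 (G.outAux σ₁ σ₂ v n).1 (G.outAux σ₁ σ₂ v n).2) := by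
  rw [MWGame.outAux]

lemma mem_V1 {v : Vtx} (h : v ≠ Vtx.v0) : v ∈ Gex.V1 := h

lemma v0_not_mem_V1 : Vtx.v0 ∉ Gex.V1 := fun h => h rfl

lemma not_mem_F {v : Vtx} (h1 : v ≠ Vtx.vf) (h2 : v ≠ Vtx.vg) : v ∉ Gex.F :=
  fun h => h.elim h1 h2

lemma vf_mem_F : Vtx.vf ∈ Gex.F := Or.inl rfl

lemma not_E {u v : Vtx} (h : ¬ edge u v = true) : ¬ Gex.E u v := h

lemma vg_mem_F : Vtx.vg ∈ Gex.F := Or.inr rfl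

end Example16

open Vtx in
/-- Memory may be required under the componentwise order: there are a
2-weighted reachability game, an initial vertex `v₀` and a cost profile `x ∈ ℕ²` such
that some strategy of Player 1 ensures `x` w.r.t. `≤_C`, but no positional strategy of
Player 1 ensures `x`. -/
theorem stmt16 :
    ∃ (V : Type) (_ : Fintype V) (G : MWGame V 2) (v₀ : V) (x : Fin 2 → ℕ),
      (∃ σ₁ : G.Strat1, ∀ σ₂ : G.Strat2,
        leC (G.cost (G.out σ₁ σ₂ v₀)) (fun i => (x i : ℕ∞))) ∧
      ∀ σ₁ : G.Strat1, (∀ h h' z, σ₁.1 h z = σ₁.1 h' z) →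
        ∃ σ₂ : G.Strat2, ¬ leC (G.cost (G.out σ₁ σ₂ v₀)) (fun i => (x i : ℕ∞)) := by
  refine ⟨Vtx, inferInstance, Gex, .v0, ![1, 1], ?_, ?_⟩
  · -- Player 1 can ensure (1,1) with memory
    refine ⟨⟨fun h u => match u with
      | .v0 => .va
      | .va => .vc
      | .vb => .vc
      | .vc => if Vtx.va ∈ h then .vf else .vg
      | .vf => .vf
      | .vg => .vg, ?_⟩, ?_⟩
    · intro h u _
      cases u
      · rfl
      · rfl
      · rfl
      · show Gex.E .vc (if Vtx.va ∈ h then .vf else .vg)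
        split <;> rfl
      · rfl
      · rfl
    · intro σ₂
      set σ₁ : Gex.Strat1 := ⟨fun h u => match u with
        | .v0 => .va
        | .va => .vc
        | .vb => .vc
        | .vc => if Vtx.va ∈ h then .vf else .vg
        | .vf => .vf
        | .vg => .vg, by
          intro h u _
          cases u
          · rfl
          · rfl
          · rfl
          · show Gex.E .vc (if Vtx.va ∈ h then .vf else .vg)
            split <;> rfl
          · rfl
          · rfl⟩ with hσ₁
      have hE : Gex.E .v0 (σ₂.1 [] .v0) := σ₂.2 [] .v0 v0_not_mem_V1
      have hs : σ₂.1 [] .v0 = .va ∨ σ₂.1 [] .v0 = .vb := by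
        rcases h : σ₂.1 [] .v0 with _ | _ | _ | _ | _ | _ <;> rw [h] at hE <;>
          first
            | exact Or.inl rfl
            | exact Or.inr rfl
            | exact absurd hE (not_E (by decide))
      have A0 : Gex.outAux σ₁ σ₂ .v0 0 = ([], .v0) := rfl
      rcases hs with hs | hs
      · -- Player 2 goes to va
        have A1 : Gex.outAux σ₁ σ₂ .v0 1 = ([.v0], .va) := by
          rw [outAux_succ, A0, if_neg v0_not_mem_V1]
          simp [hs]
        have A2 : Gex.outAux σ₁ σ₂ .v0 2 = ([.v0, .va], .vc) := by
          rw [outAux_succ, A1, if_pos (mem_V1 (by decide))]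
          rfl
        have A3 : Gex.outAux σ₁ σ₂ .v0 3 = ([.v0, .va, .vc], .vf) := by
          rw [outAux_succ, A2, if_pos (mem_V1 (by decide))]
          rfl
        have hc : Gex.cost (Gex.out σ₁ σ₂ .v0) = fun i =>
            ((wt .v0 .va i : ℕ∞) + (wt .va .vc i : ℕ∞) + (wt .vc .vf i : ℕ∞)) := by
          have e0 : Gex.out σ₁ σ₂ .v0 0 = .v0 := by rw [MWGame.out, A0]
          have e1 : Gex.out σ₁ σ₂ .v0 1 = .va := by rw [MWGame.out, A1]
          have e2 : Gex.out σ₁ σ₂ .v0 2 = .vc := by rw [MWGame.out, A2]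
          have e3 : Gex.out σ₁ σ₂ .v0 3 = .vf := by rw [MWGame.out, A3]
          rw [cost_eq _ (by rw [e0]; exact not_mem_F (by decide) (by decide))
            (by rw [e1]; exact not_mem_F (by decide) (by decide))
            (by rw [e2]; exact not_mem_F (by decide) (by decide))
            (by rw [e3]; exact vf_mem_F), e0, e1, e2, e3]
        intro i
        rw [hc]
        fin_cases i <;> simp [wt]
      · -- Player 2 goes to vb
        have A1 : Gex.outAux σ₁ σ₂ .v0 1 = ([.v0], .vb) := by
          rw [outAux_succ, A0, if_neg v0_not_mem_V1]
          simp [hs]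
        have A2 : Gex.outAux σ₁ σ₂ .v0 2 = ([.v0, .vb], .vc) := by
          rw [outAux_succ, A1, if_pos (mem_V1 (by decide))]
          rfl
        have A3 : Gex.outAux σ₁ σ₂ .v0 3 = ([.v0, .vb, .vc], .vg) := by
          rw [outAux_succ, A2, if_pos (mem_V1 (by decide))]
          rfl
        have hc : Gex.cost (Gex.out σ₁ σ₂ .v0) = fun i =>
            ((wt .v0 .vb i : ℕ∞) + (wt .vb .vc i : ℕ∞) + (wt .vc .vg i : ℕ∞)) := by
          have e0 : Gex.out σ₁ σ₂ .v0 0 = .v0 := by rw [MWGame.out, A0]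
          have e1 : Gex.out σ₁ σ₂ .v0 1 = .vb := by rw [MWGame.out, A1]
          have e2 : Gex.out σ₁ σ₂ .v0 2 = .vc := by rw [MWGame.out, A2]
          have e3 : Gex.out σ₁ σ₂ .v0 3 = .vg := by rw [MWGame.out, A3]
          rw [cost_eq _ (by rw [e0]; exact not_mem_F (by decide) (by decide))
            (by rw [e1]; exact not_mem_F (by decide) (by decide))
            (by rw [e2]; exact not_mem_F (by decide) (by decide))
            (by rw [e3]; exact vg_mem_F), e0, e1, e2, e3]
        intro i
        rw [hc]
        fin_cases i <;> simp [wt]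
  · -- no positional strategy ensures (1,1)
    intro σ₁ pos
    have hEc : Gex.E .vc (σ₁.1 [] .vc) := σ₁.2 [] .vc (mem_V1 (by decide))
    have ht : σ₁.1 [] .vc = .vf ∨ σ₁.1 [] .vc = .vg := by
      rcases h : σ₁.1 [] .vc with _ | _ | _ | _ | _ | _ <;> rw [h] at hEc <;>
        first
          | exact Or.inl rfl
          | exact Or.inr rfl
          | exact absurd hEc (not_E (by decide))
    set s : Vtx := if σ₁.1 [] .vc = .vf then .vb else .va with hsdef
    have hEs : Gex.E .v0 s := by
      rw [hsdef]; split <;> rfl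
    refine ⟨⟨fun _ _ => s, ?_⟩, ?_⟩
    · intro h u hu
      have hu0 : u = .v0 := by
        by_contra hne
        exact hu (mem_V1 hne)
      rw [hu0]
      exact hEs
    · set σ₂ : Gex.Strat2 := ⟨fun _ _ => s, by
        intro h u hu
        have hu0 : u = .v0 := by
          by_contra hne
          exact hu (mem_V1 hne)
        rw [hu0]
        exact hEs⟩ with hσ₂
      have hs_ne : s ≠ .v0 := by rw [hsdef]; split <;> decide
      have A0 : Gex.outAux σ₁ σ₂ .v0 0 = ([], .v0) := rfl
      have A1 : Gex.outAux σ₁ σ₂ .v0 1 = ([.v0], s) := by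
        rw [outAux_succ, A0, if_neg v0_not_mem_V1]
        rfl
      have hsab : s = .va ∨ s = .vb := by
        rw [hsdef]; split
        · exact Or.inr rfl
        · exact Or.inl rfl
      have hstep : σ₁.1 [.v0] s = .vc := by
        have hE2 : Gex.E s (σ₁.1 [.v0] s) := σ₁.2 [.v0] s (mem_V1 hs_ne)
        rcases hsab with hv | hv <;> rw [hv] at hE2 ⊢ <;>
          (rcases h : σ₁.1 [.v0] _ with _ | _ | _ | _ | _ | _ <;> rw [h] at hE2 <;>
            first
              | rfl
              | exact absurd hE2 (not_E (by decide)))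
      have A2 : Gex.outAux σ₁ σ₂ .v0 2 = ([.v0, s], .vc) := by
        rw [outAux_succ, A1, if_pos (mem_V1 hs_ne), hstep]
        rfl
      have hstep3 : σ₁.1 [.v0, s] .vc = σ₁.1 [] .vc := pos _ _ _
      have A3 : Gex.outAux σ₁ σ₂ .v0 3 = ([.v0, s, .vc], σ₁.1 [] .vc) := by
        rw [outAux_succ, A2, if_pos (mem_V1 (show Vtx.vc ≠ Vtx.v0 by decide)), hstep3]
        rfl
      have e0 : Gex.out σ₁ σ₂ .v0 0 = .v0 := by rw [MWGame.out, A0]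
      have e1 : Gex.out σ₁ σ₂ .v0 1 = s := by rw [MWGame.out, A1]
      have e2 : Gex.out σ₁ σ₂ .v0 2 = .vc := by rw [MWGame.out, A2]
      have e3 : Gex.out σ₁ σ₂ .v0 3 = σ₁.1 [] .vc := by rw [MWGame.out, A3]
      rcases ht with ht | ht
      · have hs : s = .vb := by rw [hsdef, if_pos ht]
        have hc : Gex.cost (Gex.out σ₁ σ₂ .v0) = fun i =>
            ((wt .v0 .vb i : ℕ∞) + (wt .vb .vc i : ℕ∞) + (wt .vc .vf i : ℕ∞)) := by
          rw [cost_eq _ (by rw [e0]; exact not_mem_F (by decide) (by decide))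
            (by rw [e1, hs]; exact not_mem_F (by decide) (by decide))
            (by rw [e2]; exact not_mem_F (by decide) (by decide))
            (by rw [e3, ht]; exact vf_mem_F), e0, e1, e2, e3, hs, ht]
        intro hle
        have := hle 1
        rw [hc] at this
        simp [wt] at this
        norm_num at this
      · have hs : s = .va := by
          rw [hsdef, if_neg]
          rw [ht]; decide
        have hc : Gex.cost (Gex.out σ₁ σ₂ .v0) = fun i =>
            ((wt .v0 .va i : ℕ∞) + (wt .va .vc i : ℕ∞) + (wt .vc .vg i : ℕ∞)) := by
          rw [cost_eq _ (by rw [e0]; exact not_mem_F (by decide) (by decide))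
            (by rw [e1, hs]; exact not_mem_F (by decide) (by decide))
            (by rw [e2]; exact not_mem_F (by decide) (by decide))
            (by rw [e3, ht]; exact vg_mem_F), e0, e1, e2, e3, hs, ht]
        intro hle
        have := hle 0
        rw [hc] at this
        simp [wt] at this
        norm_num at this
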